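/- Let q ∈ (0,1/3), c ∈ [1,∞), ε < min{1/20, (1−3q)/(4(1+q))} with ε > 0, and ℓ, r ∈ {1,…,N} with 2 ≤ ℓ ≤ r. Let A ∈ ℂ^{N×N} be Hermitian positive semidefinite with eigenvalues λ_1 ≥ … ≥ λ_N ≥ 0 satisfying: (i) λ_j = c·q^j for all j ∈ {1,…,ℓ}, and (ii) ‖A_{∖r}‖_* ≤ ε·λ_ℓ, where A_{∖r} is the tail of a fixed eigendecomposition A = Σ_j λ_j u_j u_j* beyond index r. Suppose M ∈ ℂ^{m×N} satisfies: (1) M is an ε-JL map of the column space of A_r := Σ_{j≤r} λ_j u_j u_j*; (2) M is an ε-JL map of the column space of A_r*; (3) M is an ε-JL map of the set {u_j : r < j ≤ N}. Let λ̃_j := σ_j(M A M*) and g_j := (λ̃_j − λ̃_{j+1})/λ̃_j. Then: (a) |λ̃_j − λ_j| ≤ 4ε·λ_j for all j ∈ {1,…,ℓ}; (b) λ̃_j ≤ (1+4ε)·c·q^j < (1−4ε)·c·q^{j−1} ≤ λ̃_{j−1} for all j ∈ {2,…,ℓ}, so the order of the top ℓ eigenvalues of A is strictly preserved in M A M*;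 and (c) 1/2 < g_j ≤ 1 for all j ∈ {1,…,ℓ−1}. -/

import Mathlib

open scoped Matrix ComplexOrder

/-- The squared Euclidean (ℓ²) norm of a vector in `ℂ^n`. -/
noncomputable def nsq {n : ℕ} (x : Fin n → ℂ) : ℝ := ∑ i, ‖x i‖ ^ 2

/-- The Euclidean (ℓ²) norm of a vector in `ℂ^n`. -/
noncomputable def l2 {n : ℕ} (x : Fin n → ℂ) : ℝ := Real.sqrt (nsq x)

/-- `M` is an `ε`-JL map of the set `S ⊆ ℂ^N`. -/
def IsJLMap {m N : ℕ} (M : Matrix (Fin m) (Fin N) ℂ) (ε : ℝ) (S : Set (Fin N → ℂ)) : Prop :=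
  ∀ x ∈ S, (1 - ε) * nsq x ≤ nsq (M.mulVec x) ∧ nsq (M.mulVec x) ≤ (1 + ε) * nsq x

/-- The `j`-th largest singular value of a square matrix (0-indexed), `0` if `j ≥ d`. -/
noncomputable def sval {d : ℕ} (B : Matrix (Fin d) (Fin d) ℂ) (j : ℕ) : ℝ :=
  if h : j < d then
    Real.sqrt ((Matrix.isHermitian_conjTranspose_mul_self B).eigenvalues
      (Tuple.sort (Matrix.isHermitian_conjTranspose_mul_self B).eigenvalues (Fin.rev ⟨j, h⟩)))
  else 0

/-- The nuclear norm `‖B‖_* = Σ_j σ_j(B)` of a square matrix. -/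
noncomputable def nuclearNorm {d : ℕ} (B : Matrix (Fin d) (Fin d) ℂ) : ℝ :=
  ∑ j ∈ Finset.range d, sval B j

/-- The head `A_r = Σ_{j ≤ r} λ_j u_j u_j*` of an eigendecomposition of a Hermitian matrix
(`r` counted 1-based, i.e. the sum is over all 0-based indices `j` with `j < r`). -/
noncomputable def headMatH {N : ℕ} (lam : Fin N → ℝ) (u : Fin N → Fin N → ℂ) (r : ℕ) :
    Matrix (Fin N) (Fin N) ℂ :=
  ∑ j : Fin N, if (j : ℕ) < r then
    lam j • Matrix.vecMulVec (u j) (fun k => (starRingEnd ℂ) (u j k)) else 0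

namespace S9

open Matrix Complex

variable {d m N : ℕ}

noncomputable def ip {d : ℕ} (x y : Fin d → ℂ) : ℂ := star x ⬝ᵥ y

lemma ip_self (x : Fin d → ℂ) : ip x x = (nsq x : ℂ) := by
  simp only [ip, dotProduct, nsq, Pi.star_apply, Complex.ofReal_sum]
  refine Finset.sum_congr rfl fun i _ => ?_
  rw [RCLike.star_def, mul_comm, Complex.mul_conj', Complex.ofReal_pow]

lemma nsq_nonneg (x : Fin d → ℂ) : 0 ≤ nsq x :=
  Finset.sum_nonneg fun i _ => by positivity

lemma nsq_eq_zero {x : Fin d → ℂ} (h : nsq x = 0) : x = 0 := by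
  funext i
  have := (Finset.sum_eq_zero_iff_of_nonneg (fun i _ => by positivity)).1 h i (Finset.mem_univ i)
  simpa [pow_eq_zero_iff, norm_eq_zero] using this

lemma nsq_pos {x : Fin d → ℂ} (h : x ≠ 0) : 0 < nsq x :=
  lt_of_le_of_ne (nsq_nonneg x) fun h' => h (nsq_eq_zero h'.symm)

lemma ip_conj (x y : Fin d → ℂ) : ip y x = (starRingEnd ℂ) (ip x y) := by
  simp only [ip, dotProduct, Pi.star_apply, map_sum, _root_.map_mul, RCLike.star_def,
    Complex.conj_conj]
  exact Finset.sum_congr rfl fun i _ => by ring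

lemma ip_smul_right (c : ℂ) (x y : Fin d → ℂ) : ip x (c • y) = c * ip x y := by
  simp [ip, dotProduct, Finset.mul_sum]; ring_nf
  exact Finset.sum_congr rfl fun i _ => by ring

lemma ip_smul_left (c : ℂ) (x y : Fin d → ℂ) : ip (c • x) y = (starRingEnd ℂ) c * ip x y := by
  simp [ip, dotProduct, Finset.mul_sum, RCLike.star_def]
  exact Finset.sum_congr rfl fun i _ => by ring

lemma ip_sum_right {ι : Type*} (s : Finset ι) (x : Fin d → ℂ) (f : ι → Fin d → ℂ) :
    ip x (∑ i ∈ s, f i) = ∑ i ∈ s, ip x (f i) := by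
  simp only [ip, dotProduct, Finset.sum_apply, Finset.mul_sum]
  exact Finset.sum_comm

lemma ip_sum_left {ι : Type*} (s : Finset ι) (x : Fin d → ℂ) (f : ι → Fin d → ℂ) :
    ip (∑ i ∈ s, f i) x = ∑ i ∈ s, ip (f i) x := by
  rw [ip_conj, ip_sum_right, map_sum]
  exact Finset.sum_congr rfl fun i _ => (ip_conj x (f i)).symm ▸ rfl

lemma ip_mulVec (X : Matrix (Fin m) (Fin d) ℂ) (x : Fin d → ℂ) (y : Fin m → ℂ) :
    ip (X.mulVec x) y = ip x (Xᴴ.mulVec y) := by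
  simp only [ip, star_mulVec, ← dotProduct_mulVec]

/-- quadratic form -/
noncomputable def quad {d : ℕ} (X : Matrix (Fin d) (Fin d) ℂ) (x : Fin d → ℂ) : ℝ :=
  (ip x (X.mulVec x)).re

lemma quad_conjmul (X : Matrix (Fin m) (Fin d) ℂ) (x : Fin d → ℂ) :
    quad (Xᴴ * X) x = nsq (X.mulVec x) := by
  rw [quad, ← Matrix.mulVec_mulVec, ← ip_mulVec, ip_self, Complex.ofReal_re]


/-- orthonormal family -/
def ON {d : ℕ} {ι : Type*} [DecidableEq ι] (v : ι → Fin d → ℂ) : Prop :=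
  ∀ i j, ip (v i) (v j) = if i = j then 1 else 0

lemma ON.comp {ι κ : Type*} [DecidableEq ι] [DecidableEq κ] {v : ι → Fin d → ℂ} (h : ON v) {g : κ → ι}
    (hg : Function.Injective g) : ON (v ∘ g) := by
  intro i j
  simp only [Function.comp_apply, h (g i) (g j)]
  by_cases hij : i = j
  · simp [hij]
  · rw [if_neg (fun hh => hij (hg hh)), if_neg hij]

lemma ON.ip_sum {ι : Type*} [DecidableEq ι] [Fintype ι] {v : ι → Fin d → ℂ} (h : ON v) (b c : ι → ℂ) :
    ip (∑ i, b i • v i) (∑ i, c i • v i) = ∑ i, (starRingEnd ℂ) (b i) * c i := by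
  rw [ip_sum_left]
  refine Finset.sum_congr rfl fun i _ => ?_
  rw [ip_smul_left, ip_sum_right]
  have : ∀ j ∈ Finset.univ, ip (v i) (c j • v j) = if j = i then c i else 0 := by
    intro j _
    rw [ip_smul_right, h i j]
    by_cases hij : j = i
    · simp [hij]
    · simp only [if_neg hij, mul_zero, if_neg (fun hh : i = j => hij hh.symm)]
  rw [Finset.sum_congr rfl this, Finset.sum_ite_eq' Finset.univ i fun _ => c i]
  simp

lemma ON.nsq_sum {ι : Type*} [DecidableEq ι] [Fintype ι] {v : ι → Fin d → ℂ} (h : ON v) (c : ι → ℂ) :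
    nsq (∑ i, c i • v i) = ∑ i, ‖c i‖ ^ 2 := by
  have h1 := h.ip_sum c c
  have h2 := ip_self (∑ i, c i • v i)
  rw [h1] at h2
  have : ((∑ i, ‖c i‖ ^ 2 : ℝ) : ℂ) = (nsq (∑ i, c i • v i) : ℂ) := by
    rw [← h2, Complex.ofReal_sum]
    refine Finset.sum_congr rfl fun i _ => ?_
    rw [mul_comm, Complex.mul_conj', Complex.ofReal_pow]
  exact_mod_cast this.symm

/-- lower witness: there is a (k+1)-dimensional subspace on which `quad X ≥ t · nsq` -/
def Plow {d : ℕ} (X : Matrix (Fin d) (Fin d) ℂ) (k : ℕ) (t : ℝ) : Prop :=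
  ∃ S : Submodule ℂ (Fin d → ℂ), k + 1 ≤ Module.finrank ℂ S ∧
    ∀ x ∈ S, t * nsq x ≤ quad X x

/-- upper witness: there is a (d−k)-dimensional subspace on which `quad X ≤ t · nsq` -/
def Qup {d : ℕ} (X : Matrix (Fin d) (Fin d) ℂ) (k : ℕ) (t : ℝ) : Prop :=
  ∃ S : Submodule ℂ (Fin d → ℂ), d ≤ k + Module.finrank ℂ S ∧
    ∀ x ∈ S, quad X x ≤ t * nsq x

lemma confront {X : Matrix (Fin d) (Fin d) ℂ} {k : ℕ} {t s : ℝ}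
    (hP : Plow X k t) (hQ : Qup X k s) : t ≤ s := by
  obtain ⟨S, hS, hSx⟩ := hP
  obtain ⟨T, hT, hTx⟩ := hQ
  have hfin : Module.finrank ℂ (Fin d → ℂ) = d := Module.finrank_fin_fun ℂ
  have hsum := Submodule.finrank_sup_add_finrank_inf_eq S T
  have hle : Module.finrank ℂ ↥(S ⊔ T) ≤ Module.finrank ℂ (Fin d → ℂ) :=
    Submodule.finrank_le _
  rw [hfin] at hle
  have hinf : 1 ≤ Module.finrank ℂ ↥(S ⊓ T) := by omega
  have : S ⊓ T ≠ ⊥ := by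
    intro h
    rw [h, finrank_bot] at hinf; omega
  obtain ⟨x, hx, hx0⟩ := Submodule.exists_mem_ne_zero_of_ne_bot this
  have h1 := hSx x (Submodule.mem_inf.1 hx).1
  have h2 := hTx x (Submodule.mem_inf.1 hx).2
  have hp := nsq_pos hx0
  exact le_of_mul_le_mul_right (h1.trans h2) hp

lemma ON.ip_single {ι : Type*} [DecidableEq ι] [Fintype ι] {v : ι → Fin d → ℂ} (h : ON v)
    (c : ι → ℂ) (j : ι) : ip (v j) (∑ i, c i • v i) = c j := by
  rw [ip_sum_right]
  have : ∀ i ∈ Finset.univ, ip (v j) (c i • v i) = if i = j then c j else 0 := by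
    intro i _
    rw [ip_smul_right, h j i]
    by_cases hij : i = j
    · simp [hij]
    · simp only [if_neg hij, mul_zero, if_neg (fun hh : j = i => hij hh.symm)]
  rw [Finset.sum_congr rfl this, Finset.sum_ite_eq' Finset.univ j fun _ => c j]
  simp

lemma ON.linearIndependent {ι : Type*} [DecidableEq ι] [Fintype ι] {v : ι → Fin d → ℂ}
    (h : ON v) : LinearIndependent ℂ v := by
  rw [Fintype.linearIndependent_iff]
  intro c hc j
  have := h.ip_single c j
  rw [hc] at this
  simpa [ip] using this.symm

lemma quad_sum {X : Matrix (Fin d) (Fin d) ℂ} {ι : Type*} [DecidableEq ι] [Fintype ι]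
    {v : ι → Fin d → ℂ} {dd : ι → ℝ} (hON : ON v)
    (heig : ∀ i, X.mulVec (v i) = (dd i : ℂ) • v i) (c : ι → ℂ) :
    quad X (∑ i, c i • v i) = ∑ i, ‖c i‖ ^ 2 * dd i := by
  have hmv : X.mulVec (∑ i, c i • v i) = ∑ i, (c i * (dd i : ℂ)) • v i := by
    rw [← Matrix.mulVecLin_apply, map_sum]
    refine Finset.sum_congr rfl fun i _ => ?_
    rw [_root_.map_smul, Matrix.mulVecLin_apply, heig i, smul_smul]
  rw [quad, hmv, hON.ip_sum]
  have : ∀ i ∈ Finset.univ,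
      (starRingEnd ℂ) (c i) * (c i * (dd i : ℂ)) = ((‖c i‖ ^ 2 * dd i : ℝ) : ℂ) := by
    intro i _
    rw [← mul_assoc, mul_comm ((starRingEnd ℂ) (c i)) (c i), Complex.mul_conj',
      Complex.ofReal_mul, Complex.ofReal_pow]
  rw [Finset.sum_congr rfl this, ← Complex.ofReal_sum, Complex.ofReal_re]

lemma span_witness (X : Matrix (Fin d) (Fin d) ℂ) {v : Fin d → Fin d → ℂ} {dd : Fin d → ℝ}
    (hON : ON v) (heig : ∀ i, X.mulVec (v i) = (dd i : ℂ) • v i)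
    {n : ℕ} (g : Fin n → Fin d) (hg : Function.Injective g) :
    Module.finrank ℂ ↥(Submodule.span ℂ (Set.range (v ∘ g))) = n ∧
    (∀ t : ℝ, (∀ i, t ≤ dd (g i)) →
      ∀ x ∈ Submodule.span ℂ (Set.range (v ∘ g)), t * nsq x ≤ quad X x) ∧
    (∀ t : ℝ, (∀ i, dd (g i) ≤ t) →
      ∀ x ∈ Submodule.span ℂ (Set.range (v ∘ g)), quad X x ≤ t * nsq x) := by
  have hON' : ON (v ∘ g) := hON.comp hg
  have hli := hON'.linearIndependent
  refine ⟨?_, ?_, ?_⟩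
  · rw [finrank_span_eq_card hli, Fintype.card_fin]
  · intro t ht x hx
    obtain ⟨c, hc⟩ := (Submodule.mem_span_range_iff_exists_fun ℂ).1 hx
    rw [← hc, hON'.nsq_sum, quad_sum hON' (fun i => heig (g i)) c, Finset.mul_sum]
    exact Finset.sum_le_sum fun i _ => by
      rw [mul_comm (t : ℝ)]
      exact mul_le_mul_of_nonneg_left (ht i) (by positivity)
  · intro t ht x hx
    obtain ⟨c, hc⟩ := (Submodule.mem_span_range_iff_exists_fun ℂ).1 hx
    rw [← hc, hON'.nsq_sum, quad_sum hON' (fun i => heig (g i)) c, Finset.mul_sum]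
    exact Finset.sum_le_sum fun i _ => by
      rw [mul_comm (t : ℝ)]
      exact mul_le_mul_of_nonneg_left (ht i) (by positivity)

/-- j-th largest eigenvalue of a Hermitian matrix (0-based). -/
noncomputable def sEig {d : ℕ} (X : Matrix (Fin d) (Fin d) ℂ) (hX : X.IsHermitian)
    (k : Fin d) : ℝ :=
  hX.eigenvalues (Tuple.sort hX.eigenvalues (Fin.rev k))

lemma herm_ON (X : Matrix (Fin d) (Fin d) ℂ) (hX : X.IsHermitian) :
    ON (fun i => (hX.eigenvectorBasis i : Fin d → ℂ)) := by
  intro i j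
  have := orthonormal_iff_ite.1 hX.eigenvectorBasis.orthonormal i j
  rw [EuclideanSpace.inner_eq_star_dotProduct, dotProduct_comm] at this
  exact this

lemma herm_eig (X : Matrix (Fin d) (Fin d) ℂ) (hX : X.IsHermitian) (i : Fin d) :
    X.mulVec (hX.eigenvectorBasis i : Fin d → ℂ)
      = ((hX.eigenvalues i : ℝ) : ℂ) • (hX.eigenvectorBasis i : Fin d → ℂ) := by
  have h := hX.mulVec_eigenvectorBasis i
  rw [RCLike.real_smul_eq_coe_smul (K := ℂ)] at h
  exact h

lemma eig_witness (X : Matrix (Fin d) (Fin d) ℂ) {v : Fin d → Fin d → ℂ} {dd : Fin d → ℝ}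
    (hON : ON v) (heig : ∀ i, X.mulVec (v i) = (dd i : ℂ) • v i)
    (hanti : ∀ i j : Fin d, i ≤ j → dd j ≤ dd i) (k : Fin d) :
    Plow X k (dd k) ∧ Qup X k (dd k) := by
  constructor
  · have hk : (k : ℕ) + 1 ≤ d := k.isLt
    have hg : Function.Injective (fun i : Fin ((k : ℕ) + 1) => (Fin.castLE hk i)) :=
      fun a b hab => by
        simpa [Fin.ext_iff] using hab
    obtain ⟨hrank, hlow, _⟩ := span_witness X hON heig _ hg
    exact ⟨_, hrank.ge, hlow (dd k) (fun i => hanti _ k (by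
      simpa [Fin.le_def] using Nat.lt_succ_iff.1 i.isLt))⟩
  · have hg : Function.Injective
        (fun i : Fin (d - (k : ℕ)) => (⟨(k : ℕ) + (i : ℕ), by omega⟩ : Fin d)) :=
      fun a b hab => by
        simpa [Fin.ext_iff] using hab
    obtain ⟨hrank, _, hup⟩ := span_witness X hON heig _ hg
    refine ⟨_, by omega, hup (dd k) (fun i => hanti k _ (by simp [Fin.le_def]))⟩

lemma eig_unique (X : Matrix (Fin d) (Fin d) ℂ) {v v' : Fin d → Fin d → ℂ}
    {dd dd' : Fin d → ℝ}
    (hON : ON v) (heig : ∀ i, X.mulVec (v i) = (dd i : ℂ) • v i)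
    (hanti : ∀ i j : Fin d, i ≤ j → dd j ≤ dd i)
    (hON' : ON v') (heig' : ∀ i, X.mulVec (v' i) = (dd' i : ℂ) • v' i)
    (hanti' : ∀ i j : Fin d, i ≤ j → dd' j ≤ dd' i) (k : Fin d) :
    dd k = dd' k :=
  le_antisymm
    (confront (eig_witness X hON heig hanti k).1 (eig_witness X hON' heig' hanti' k).2)
    (confront (eig_witness X hON' heig' hanti' k).1 (eig_witness X hON heig hanti k).2)

lemma sEig_eq (X : Matrix (Fin d) (Fin d) ℂ) (hX : X.IsHermitian)
    {v : Fin d → Fin d → ℂ} {dd : Fin d → ℝ}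
    (hON : ON v) (heig : ∀ i, X.mulVec (v i) = (dd i : ℂ) • v i)
    (hanti : ∀ i j : Fin d, i ≤ j → dd j ≤ dd i) (k : Fin d) :
    sEig X hX k = dd k := by
  set σ := Tuple.sort hX.eigenvalues with hσ
  have hmono := Tuple.monotone_sort hX.eigenvalues
  refine eig_unique X (v' := v) (dd' := dd)
    (v := fun i => (hX.eigenvectorBasis (σ (Fin.rev i)) : Fin d → ℂ))
    (dd := fun i => hX.eigenvalues (σ (Fin.rev i))) ?_ ?_ ?_ hON heig hanti k
  · exact (herm_ON X hX).comp (fun a b hab => by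
      simpa using σ.injective hab)
  · exact fun i => herm_eig X hX (σ (Fin.rev i))
  · intro i j hij
    exact hmono (Fin.rev_le_rev.2 hij)

lemma sum_f_eig (X : Matrix (Fin d) (Fin d) ℂ) (hX : X.IsHermitian)
    {v : Fin d → Fin d → ℂ} {dd : Fin d → ℝ}
    (hON : ON v) (heig : ∀ i, X.mulVec (v i) = (dd i : ℂ) • v i) (f : ℝ → ℝ) :
    ∑ i, f (hX.eigenvalues i) = ∑ i, f (dd i) := by
  set π : Equiv.Perm (Fin d) := Fin.revPerm.trans (Tuple.sort dd) with hπ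
  have hπa : ∀ i j : Fin d, i ≤ j → dd (π j) ≤ dd (π i) := by
    intro i j hij
    exact Tuple.monotone_sort dd (Fin.rev_le_rev.2 hij)
  have hseq : ∀ k, sEig X hX k = dd (π k) := by
    refine sEig_eq X hX (v := fun i => v (π i)) (dd := fun i => dd (π i))
      (hON.comp π.injective) (fun i => heig (π i)) hπa
  set e : Equiv.Perm (Fin d) := Fin.revPerm.trans (Tuple.sort hX.eigenvalues) with he
  calc ∑ i, f (hX.eigenvalues i) = ∑ k, f (hX.eigenvalues (e k)) :=
        (Equiv.sum_comp e fun i => f (hX.eigenvalues i)).symm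
    _ = ∑ k, f (dd (π k)) := by
        refine Finset.sum_congr rfl fun k _ => ?_
        have := hseq k
        simp only [sEig] at this
        rw [he]; simp only [Equiv.trans_apply, Fin.revPerm_apply]
        rw [this]
    _ = ∑ i, f (dd i) := Equiv.sum_comp π fun i => f (dd i)

lemma ip_cs (x y : Fin d → ℂ) : ‖ip x y‖ ^ 2 ≤ nsq x * nsq y := by
  have h1 : ‖ip x y‖ ≤ ∑ i, ‖x i‖ * ‖y i‖ := by
    unfold ip dotProduct
    refine le_trans (norm_sum_le _ _) (le_of_eq (Finset.sum_congr rfl fun i _ => ?_))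
    rw [Pi.star_apply, norm_mul, norm_star]
  have h2 := Finset.sum_mul_sq_le_sq_mul_sq Finset.univ (fun i => ‖x i‖) (fun i => ‖y i‖)
  have h3 : ‖ip x y‖ ^ 2 ≤ (∑ i, ‖x i‖ * ‖y i‖) ^ 2 := by
    have hnn : (0:ℝ) ≤ ∑ i, ‖x i‖ * ‖y i‖ :=
      Finset.sum_nonneg fun i _ => mul_nonneg (norm_nonneg _) (norm_nonneg _)
    exact pow_le_pow_left₀ (norm_nonneg _) h1 2
  exact le_trans h3 (by simpa [nsq] using h2)

/-- cross-dimension transfer of lower witnesses -/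
lemma transfer {m N : ℕ} (C : Matrix (Fin m) (Fin N) ℂ) (k : ℕ) (t : ℝ) (ht : 0 < t)
    (h : Plow (Cᴴ * C) k t) : k < m ∧ Plow (C * Cᴴ) k t := by
  obtain ⟨S, hS, hSx⟩ := h
  have hq : ∀ x ∈ S, t * nsq x ≤ nsq (C.mulVec x) := by
    intro x hx
    have := hSx x hx
    rwa [quad_conjmul] at this
  set f := C.mulVecLin with hf
  set S' := S.map f with hS'
  have hinj : ∀ x ∈ S, f x = 0 → x = 0 := by
    intro x hx hfx
    have h1 := hq x hx
    rw [Matrix.mulVecLin_apply] at hfx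
    rw [hfx] at h1
    by_contra hne
    have := nsq_pos hne
    have hz : nsq (0 : Fin m → ℂ) = 0 := by simp [nsq]
    rw [hz] at h1
    nlinarith
  -- finrank S ≤ finrank S'
  have hrank : Module.finrank ℂ ↥S ≤ Module.finrank ℂ ↥S' := by
    have hinj2 : Function.Injective (LinearMap.codRestrict S' (f.domRestrict S)
        (fun x => Submodule.mem_map_of_mem x.2)) := by
      intro a b hab
      have h1 : f (a : Fin N → ℂ) = f (b : Fin N → ℂ) := congrArg Subtype.val hab
      have hz : f ((a : Fin N → ℂ) - (b : Fin N → ℂ)) = 0 := by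
        rw [map_sub, h1, sub_self]
      have hmem : ((a : Fin N → ℂ) - (b : Fin N → ℂ)) ∈ S := S.sub_mem a.2 b.2
      exact Subtype.ext (sub_eq_zero.1 (hinj _ hmem hz))
    exact LinearMap.finrank_le_finrank_of_injective hinj2
  have hkm : k + 1 ≤ Module.finrank ℂ ↥S' := le_trans hS hrank
  have hmle : Module.finrank ℂ ↥S' ≤ m := by
    have h1 : Module.finrank ℂ ↥S' ≤ Module.finrank ℂ (Fin m → ℂ) := Submodule.finrank_le _
    rwa [Module.finrank_fin_fun] at h1
  refine ⟨by omega, S', hkm, ?_⟩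
  intro y hy
  obtain ⟨x, hx, hxy⟩ := Submodule.mem_map.1 hy
  rw [Matrix.mulVecLin_apply] at hxy
  subst hxy
  rw [show C * Cᴴ = (Cᴴ)ᴴ * Cᴴ by rw [Matrix.conjTranspose_conjTranspose], quad_conjmul]
  -- t * nsq (C x) ≤ nsq (Cᴴ (C x))
  by_cases hx0 : x = 0
  · subst hx0
    simp [Matrix.mulVec_zero, nsq]
  · have hnx := nsq_pos hx0
    have h1 : t * nsq x ≤ nsq (C.mulVec x) := hq x hx
    -- Cauchy-Schwarz : (nsq (C x))^2 ≤ nsq x * nsq (Cᴴ (C x))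
    have hcs : nsq (C.mulVec x) ^ 2 ≤ nsq x * nsq (Cᴴ.mulVec (C.mulVec x)) := by
      have hip : (nsq (C.mulVec x) : ℂ) = ip x (Cᴴ.mulVec (C.mulVec x)) := by
        rw [← ip_mulVec, ip_self]
      have habs : nsq (C.mulVec x) = ‖ip x (Cᴴ.mulVec (C.mulVec x))‖ := by
        rw [← hip, Complex.norm_of_nonneg (nsq_nonneg _)]
      rw [habs]
      exact ip_cs x (Cᴴ.mulVec (C.mulVec x))
    have h2 : t * nsq (C.mulVec x) * nsq x ≤ nsq (Cᴴ.mulVec (C.mulVec x)) * nsq x := by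
      have h3 : t * nsq x * nsq (C.mulVec x) ≤ nsq (C.mulVec x) ^ 2 := by
        nlinarith [nsq_nonneg (C.mulVec x)]
      nlinarith [nsq_nonneg (Cᴴ.mulVec (C.mulVec x))]
    exact le_of_mul_le_mul_right h2 hnx

/-! ### rank-one decompositions -/

noncomputable def Gmat {N : ℕ} (u : Fin N → Fin N → ℂ) (w : Fin N → ℝ) :
    Matrix (Fin N) (Fin N) ℂ :=
  ∑ j, w j • Matrix.vecMulVec (u j) (fun k => (starRingEnd ℂ) (u j k))

lemma Gmat_apply (u : Fin N → Fin N → ℂ) (w : Fin N → ℝ) (i l : Fin N) :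
    Gmat u w i l = ∑ j, ((w j : ℂ)) * (u j i * (starRingEnd ℂ) (u j l)) := by
  simp only [Gmat, Finset.sum_apply, Matrix.sum_apply, Matrix.smul_apply,
    Matrix.vecMulVec_apply, Complex.real_smul]

lemma Gmat_mulVec (u : Fin N → Fin N → ℂ) (w : Fin N → ℝ) (x : Fin N → ℂ) :
    (Gmat u w).mulVec x = ∑ j, ((w j : ℂ) * ip (u j) x) • u j := by
  funext i
  simp only [Matrix.mulVec, dotProduct, Gmat_apply, ip, Pi.star_apply,
    RCLike.star_def, Finset.sum_apply, Pi.smul_apply, smul_eq_mul]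
  calc ∑ l, (∑ j, ((w j : ℂ)) * (u j i * (starRingEnd ℂ) (u j l))) * x l
      = ∑ l, ∑ j, ((w j : ℂ)) * (u j i * (starRingEnd ℂ) (u j l)) * x l := by
        exact Finset.sum_congr rfl fun l _ => Finset.sum_mul _ _ _
    _ = ∑ j, ∑ l, ((w j : ℂ)) * (u j i * (starRingEnd ℂ) (u j l)) * x l := Finset.sum_comm
    _ = ∑ j, ((w j : ℂ) * ∑ l, (starRingEnd ℂ) (u j l) * x l) * u j i := by
        refine Finset.sum_congr rfl fun j _ => ?_
        rw [Finset.mul_sum, Finset.sum_mul]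
        exact Finset.sum_congr rfl fun l _ => by ring

lemma Gmat_herm (u : Fin N → Fin N → ℂ) (w : Fin N → ℝ) : (Gmat u w).IsHermitian := by
  have : (Gmat u w)ᴴ = Gmat u w := by
    ext i j
    rw [Matrix.conjTranspose_apply, Gmat_apply, Gmat_apply, RCLike.star_def, map_sum]
    refine Finset.sum_congr rfl fun k _ => ?_
    simp only [_root_.map_mul, Complex.conj_conj, Complex.conj_ofReal]
    ring
  exact this

lemma Gmat_mulVec_u {u : Fin N → Fin N → ℂ} (hON : ON u) (w : Fin N → ℝ) (i : Fin N) :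
    (Gmat u w).mulVec (u i) = ((w i : ℝ) : ℂ) • u i := by
  rw [Gmat_mulVec]
  rw [Finset.sum_eq_single i]
  · rw [hON i i, if_pos rfl, mul_one]
  · intro j _ hji
    rw [hON j i, if_neg hji, mul_zero, zero_smul]
  · intro h; exact absurd (Finset.mem_univ i) h

lemma Gmat_comp {u : Fin N → Fin N → ℂ} (hON : ON u) (w w' : Fin N → ℝ) (x : Fin N → ℂ) :
    (Gmat u w).mulVec ((Gmat u w').mulVec x)
      = (Gmat u (fun j => w j * w' j)).mulVec x := by
  rw [Gmat_mulVec u w' x, ← Matrix.mulVecLin_apply, map_sum]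
  rw [Gmat_mulVec u (fun j => w j * w' j) x]
  refine Finset.sum_congr rfl fun j _ => ?_
  rw [_root_.map_smul, Matrix.mulVecLin_apply, Gmat_mulVec_u hON, smul_smul]
  rw [Complex.ofReal_mul]
  ring_nf

lemma quad_add (X Y : Matrix (Fin d) (Fin d) ℂ) (x : Fin d → ℂ) :
    quad (X + Y) x = quad X x + quad Y x := by
  simp only [quad, Matrix.add_mulVec]
  have : ip x (X.mulVec x + Y.mulVec x) = ip x (X.mulVec x) + ip x (Y.mulVec x) := by
    simp [ip, dotProduct_add]
  rw [this, Complex.add_re]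

lemma quad_sandwich {m N : ℕ} (Y : Matrix (Fin N) (Fin N) ℂ) (M : Matrix (Fin m) (Fin N) ℂ)
    (x : Fin m → ℂ) : quad (M * Y * Mᴴ) x = quad Y (Mᴴ.mulVec x) := by
  unfold quad
  rw [show (M * Y * Mᴴ).mulVec x = M.mulVec (Y.mulVec (Mᴴ.mulVec x)) by
    rw [Matrix.mulVec_mulVec, Matrix.mulVec_mulVec]]
  have h := ip_mulVec Mᴴ x (Y.mulVec (Mᴴ.mulVec x))
  rw [Matrix.conjTranspose_conjTranspose] at h
  rw [← h]

lemma quad_Gmat (u : Fin N → Fin N → ℂ) (w : Fin N → ℝ) (z : Fin N → ℂ) :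
    quad (Gmat u w) z = ∑ j, w j * ‖ip (u j) z‖ ^ 2 := by
  rw [quad, Gmat_mulVec, ip_sum_right]
  have : ∀ j ∈ Finset.univ, ip z (((w j : ℂ) * ip (u j) z) • u j)
      = ((w j * ‖ip (u j) z‖ ^ 2 : ℝ) : ℂ) := by
    intro j _
    rw [ip_smul_right]
    have h1 : ip z (u j) = (starRingEnd ℂ) (ip (u j) z) := ip_conj (u j) z
    rw [h1]
    rw [mul_assoc, Complex.mul_conj]
    rw [Complex.ofReal_mul]
    congr 1
    rw [Complex.sq_norm]
  rw [Finset.sum_congr rfl this, ← Complex.ofReal_sum, Complex.ofReal_re]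

lemma Plow_congr {X Y : Matrix (Fin d) (Fin d) ℂ} {k : ℕ} {t : ℝ}
    (h : ∀ x, quad X x = quad Y x) : Plow X k t → Plow Y k t := by
  rintro ⟨S, hS, hq⟩
  exact ⟨S, hS, fun x hx => (h x) ▸ hq x hx⟩

lemma Qup_congr {X Y : Matrix (Fin d) (Fin d) ℂ} {k : ℕ} {t : ℝ}
    (h : ∀ x, quad X x = quad Y x) : Qup X k t → Qup Y k t := by
  rintro ⟨S, hS, hq⟩
  exact ⟨S, hS, fun x hx => (h x) ▸ hq x hx⟩

lemma sEig_witness (X : Matrix (Fin d) (Fin d) ℂ) (hX : X.IsHermitian) (k : Fin d) :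
    Plow X k (sEig X hX k) ∧ Qup X k (sEig X hX k) := by
  refine eig_witness X
    (v := fun i => (hX.eigenvectorBasis (Tuple.sort hX.eigenvalues (Fin.rev i)) : Fin d → ℂ))
    (dd := fun i => hX.eigenvalues (Tuple.sort hX.eigenvalues (Fin.rev i))) ?_ ?_ ?_ k
  · exact (herm_ON X hX).comp (fun a b hab => by
      simpa using (Tuple.sort hX.eigenvalues).injective hab)
  · exact fun i => herm_eig X hX _
  · intro i j hij
    exact Tuple.monotone_sort hX.eigenvalues (Fin.rev_le_rev.2 hij)

lemma sEig_nonneg {T : Matrix (Fin d) (Fin d) ℂ} (hT : T.PosSemidef) (k : Fin d) :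
    0 ≤ sEig T hT.isHermitian k :=
  hT.eigenvalues_nonneg _

lemma sval_eq_sEig {T : Matrix (Fin d) (Fin d) ℂ} (hT : T.PosSemidef) (k : ℕ) (hk : k < d) :
    sval T k = sEig T hT.isHermitian ⟨k, hk⟩ := by
  have hTT := hT.isHermitian
  have hON : ON (fun i =>
      (hTT.eigenvectorBasis (Tuple.sort hTT.eigenvalues (Fin.rev i)) : Fin d → ℂ)) :=
    (herm_ON T hTT).comp (fun a b hab => by
      simpa using (Tuple.sort hTT.eigenvalues).injective hab)
  have hnn : ∀ i : Fin d, 0 ≤ hTT.eigenvalues (Tuple.sort hTT.eigenvalues (Fin.rev i)) :=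
    fun i => hT.eigenvalues_nonneg _
  have heig2 : ∀ i, (Tᴴ * T).mulVec
      (hTT.eigenvectorBasis (Tuple.sort hTT.eigenvalues (Fin.rev i)) : Fin d → ℂ)
      = (((hTT.eigenvalues (Tuple.sort hTT.eigenvalues (Fin.rev i))) ^ 2 : ℝ) : ℂ) •
        (hTT.eigenvectorBasis (Tuple.sort hTT.eigenvalues (Fin.rev i)) : Fin d → ℂ) := by
    intro i
    rw [← Matrix.mulVec_mulVec, herm_eig T hTT, Matrix.mulVec_smul, hTT.eq,
      herm_eig T hTT, smul_smul]
    rw [show ((hTT.eigenvalues (Tuple.sort hTT.eigenvalues (Fin.rev i)) : ℝ) : ℂ) *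
        ((hTT.eigenvalues (Tuple.sort hTT.eigenvalues (Fin.rev i)) : ℝ) : ℂ)
        = (((hTT.eigenvalues (Tuple.sort hTT.eigenvalues (Fin.rev i))) ^ 2 : ℝ) : ℂ) by
      rw [Complex.ofReal_pow]; ring]
  have hanti2 : ∀ i j : Fin d, i ≤ j →
      (hTT.eigenvalues (Tuple.sort hTT.eigenvalues (Fin.rev j))) ^ 2 ≤
      (hTT.eigenvalues (Tuple.sort hTT.eigenvalues (Fin.rev i))) ^ 2 := by
    intro i j hij
    exact pow_le_pow_left₀ (hnn j) (Tuple.monotone_sort hTT.eigenvalues (Fin.rev_le_rev.2 hij)) 2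
  have hs := sEig_eq (Tᴴ * T) (Matrix.isHermitian_conjTranspose_mul_self T)
    hON heig2 hanti2 ⟨k, hk⟩
  rw [sval, dif_pos hk]
  have : (Matrix.isHermitian_conjTranspose_mul_self T).eigenvalues
      (Tuple.sort (Matrix.isHermitian_conjTranspose_mul_self T).eigenvalues (Fin.rev ⟨k, hk⟩))
      = sEig (Tᴴ * T) (Matrix.isHermitian_conjTranspose_mul_self T) ⟨k, hk⟩ := rfl
  rw [this, hs, Real.sqrt_sq (hnn ⟨k, hk⟩)]
  rfl

lemma headMatH_eq_Gmat (lam : Fin N → ℝ) (u : Fin N → Fin N → ℂ) (r : ℕ) :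
    headMatH lam u r = Gmat u (fun j => if (j : ℕ) < r then lam j else 0) := by
  unfold headMatH Gmat
  refine Finset.sum_congr rfl fun j _ => ?_
  simp only []
  split_ifs with h
  · rfl
  · rw [zero_smul]

lemma Gmat_sub (u : Fin N → Fin N → ℂ) (w w' : Fin N → ℝ) :
    Gmat u w - Gmat u w' = Gmat u (fun j => w j - w' j) := by
  unfold Gmat
  rw [← Finset.sum_sub_distrib]
  exact Finset.sum_congr rfl fun j _ => (sub_smul _ _ _).symm

end S9

lemma aux_abs {ε s L : ℝ} (hε0 : 0 < ε) (hε1 : ε < 1) (hL : 0 < L)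
    (hsl : (1 - ε) * L ≤ s) (hsu : s ≤ (1 + ε) * L + (1 + ε) * (ε * L)) :
    |s - L| ≤ 4 * ε * L := by
  rw [abs_le]
  constructor
  · nlinarith [mul_pos hε0 hL]
  · nlinarith [mul_pos (mul_pos hε0 hε0) hL, mul_pos hε0 hL]

lemma aux_sandwich {ε s L : ℝ} (h : |s - L| ≤ 4 * ε * L) :
    (1 - 4 * ε) * L ≤ s ∧ s ≤ (1 + 4 * ε) * L := by
  rw [abs_le] at h
  obtain ⟨h1, h2⟩ := h
  constructor <;> nlinarith

lemma aux_geom {q ε : ℝ} (hq0 : 0 < q) (hε0 : 0 < ε) (hεq : 4 * ε * (1 + q) < 1 - 3 * q) :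
    (1 + 4 * ε) * q < 1 - 4 * ε := by nlinarith

lemma aux_geom2 {q ε : ℝ} (hq0 : 0 < q) (hε0 : 0 < ε) (hε20 : ε < 1 / 20)
    (hεq : 4 * ε * (1 + q) < 1 - 3 * q) : 2 * (1 + 4 * ε) * q < 1 - 4 * ε := by
  nlinarith [mul_pos hq0 hε0]

lemma aux_ratio {x y : ℝ} (hx : 0 < x) (hy : 0 ≤ y) (h2y : 2 * y < x) :
    1 / 2 < (x - y) / x ∧ (x - y) / x ≤ 1 := by
  constructor
  · rw [lt_div_iff₀ hx]; linarith
  · rw [div_le_one hx]; linarith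


open S9

/-- For a Hermitian PSD matrix with exponentially decaying top eigenvalues and
small tail, the top eigenvalues are accurately approximated by those of `M A M*`
(`λ̃_j := σ_j(M A M*)`, written 0-based below): (a) `|λ̃_j − λ_j| ≤ 4ε·λ_j` on `{1,…,ℓ}`;
(b) `λ̃_j ≤ (1+4ε)cq^j < (1−4ε)cq^{j−1} ≤ λ̃_{j−1}` on `{2,…,ℓ}` (ordering is preserved);
(c) `1/2 < g_j ≤ 1` on `{1,…,ℓ−1}`, where `g_j = (λ̃_j − λ̃_{j+1})/λ̃_j`. -/
theorem stmt_9 {N m : ℕ} (q c ε : ℝ)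
    (hq0 : 0 < q) (hq1 : q < 1 / 3) (hc : 1 ≤ c)
    (hε0 : 0 < ε) (hε1 : ε < min (1 / 20) ((1 - 3 * q) / (4 * (1 + q))))
    (ℓ r : ℕ) (hℓ2 : 2 ≤ ℓ) (hℓr : ℓ ≤ r) (hr1 : 1 ≤ r) (hrN : r ≤ N)
    (A : Matrix (Fin N) (Fin N) ℂ)
    (hHerm : A.IsHermitian) (hPSD : A.PosSemidef)
    (lam : Fin N → ℝ) (u : Fin N → Fin N → ℂ)
    (hord : ∀ i j : Fin N, i ≤ j → lam j ≤ lam i) (hnn : ∀ j, 0 ≤ lam j)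
    (hu : ∀ i j, ∑ k, (starRingEnd ℂ) (u i k) * u j k = if i = j then 1 else 0)
    (hA : A = ∑ j, lam j • Matrix.vecMulVec (u j) (fun k => (starRingEnd ℂ) (u j k)))
    (hdecay : ∀ j : ℕ, (hj : j < ℓ) → lam ⟨j, by omega⟩ = c * q ^ (j + 1))
    (htail : nuclearNorm (A - headMatH lam u r) ≤ ε * lam ⟨ℓ - 1, by omega⟩)
    (M : Matrix (Fin m) (Fin N) ℂ)
    (hM1 : IsJLMap M ε (Set.range (headMatH lam u r).mulVec))
    (hM2 : IsJLMap M ε (Set.range ((headMatH lam u r)ᴴ).mulVec))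
    (hM3 : IsJLMap M ε {x | ∃ j : Fin N, r ≤ (j : ℕ) ∧ x = u j}) :
    -- (a)
    (∀ j : ℕ, (hj : j < ℓ) →
      |sval (M * A * Mᴴ) j - lam ⟨j, by omega⟩| ≤ 4 * ε * lam ⟨j, by omega⟩) ∧
    -- (b)  (0-based `j` here corresponds to the 1-based index `j+1 ∈ {2,…,ℓ}`)
    (∀ j : ℕ, 1 ≤ j → j < ℓ →
      sval (M * A * Mᴴ) j ≤ (1 + 4 * ε) * c * q ^ (j + 1) ∧
      (1 + 4 * ε) * c * q ^ (j + 1) < (1 - 4 * ε) * c * q ^ j ∧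
      (1 - 4 * ε) * c * q ^ j ≤ sval (M * A * Mᴴ) (j - 1)) ∧
    -- (c)
    (∀ j : ℕ, j < ℓ - 1 →
      1 / 2 < (sval (M * A * Mᴴ) j - sval (M * A * Mᴴ) (j + 1)) / sval (M * A * Mᴴ) j ∧
      (sval (M * A * Mᴴ) j - sval (M * A * Mᴴ) (j + 1)) / sval (M * A * Mᴴ) j ≤ 1) := by
  have hε20 : ε < 1 / 20 := lt_of_lt_of_le hε1 (min_le_left _ _)
  have hεq : 4 * ε * (1 + q) < 1 - 3 * q := by
    have h2 := lt_of_lt_of_le hε1 (min_le_right _ _)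
    have hpos : (0:ℝ) < 4 * (1 + q) := by linarith
    have h3 := (lt_div_iff₀ hpos).1 h2
    nlinarith
  have hq1' : q < 1 := by linarith
  have hON : ON u := by
    intro i j
    have := hu i j
    simpa [ip, dotProduct, RCLike.star_def] using this
  -- weight functions
  set headw : Fin N → ℝ := fun j => if (j : ℕ) < r then lam j else 0 with hheadw
  set tailw : Fin N → ℝ := fun j => if (j : ℕ) < r then 0 else lam j with htailw
  set sqw : Fin N → ℝ := fun j => if (j : ℕ) < r then Real.sqrt (lam j) else 0 with hsqw
  set invw : Fin N → ℝ := fun j =>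
    if (j : ℕ) < r then (if lam j = 0 then 0 else (Real.sqrt (lam j))⁻¹) else 0 with hinvw
  have hsqsq : ∀ j, sqw j * sqw j = headw j := by
    intro j; rw [hsqw, hheadw]; dsimp only; split_ifs with h
    · exact Real.mul_self_sqrt (hnn j)
    · ring
  have hheadinv : ∀ j, headw j * invw j = sqw j := by
    intro j; rw [hheadw, hinvw, hsqw]; dsimp only; split_ifs with h h0
    · rw [h0, Real.sqrt_zero, zero_mul]
    · have hs : Real.sqrt (lam j) ≠ 0 := by
        rw [Real.sqrt_ne_zero' ]
        exact lt_of_le_of_ne (hnn j) (Ne.symm h0)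
      rw [← Real.mul_self_sqrt (hnn j)]
      rw [Real.sqrt_mul_self (Real.sqrt_nonneg _)]
      field_simp
    · ring
  have htailsub : ∀ j, lam j - headw j = tailw j := by
    intro j; rw [hheadw, htailw]; dsimp only; split_ifs <;> ring
  have htailnn : ∀ j, 0 ≤ tailw j := by
    intro j; rw [htailw]; dsimp only; split_ifs
    · exact le_rfl
    · exact hnn j
  -- matrix identities
  have hAG : A = Gmat u lam := hA
  have hArG : headMatH lam u r = Gmat u headw := headMatH_eq_Gmat lam u r
  have htlG : A - headMatH lam u r = Gmat u tailw := by
    rw [hAG, hArG, Gmat_sub, funext htailsub]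
  have hBh : (Gmat u sqw)ᴴ = Gmat u sqw := Gmat_herm u sqw
  have hquadAr : ∀ z, quad (Gmat u headw) z = nsq ((Gmat u sqw).mulVec z) := by
    intro z
    have h1 : (Gmat u headw).mulVec z = (Gmat u sqw).mulVec ((Gmat u sqw).mulVec z) := by
      rw [show headw = fun j => sqw j * sqw j from funext fun j => (hsqsq j).symm,
        ← Gmat_comp hON]
    rw [quad, h1]
    have h2 : ip z ((Gmat u sqw).mulVec ((Gmat u sqw).mulVec z))
        = ip ((Gmat u sqw).mulVec z) ((Gmat u sqw).mulVec z) := by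
      conv_lhs => rw [← hBh]
      rw [← ip_mulVec, hBh]
    rw [h2, ip_self, Complex.ofReal_re]
  have hmem : ∀ z, (Gmat u sqw).mulVec z ∈ Set.range (headMatH lam u r).mulVec := by
    intro z
    refine ⟨(Gmat u invw).mulVec z, ?_⟩
    rw [hArG, Gmat_comp hON, show (fun j => headw j * invw j) = sqw from funext hheadinv]
  have hJLl : ∀ z, (1 - ε) * quad (Gmat u headw) z
      ≤ nsq (M.mulVec ((Gmat u sqw).mulVec z)) := by
    intro z
    rw [hquadAr]
    exact (hM1 _ (hmem z)).1
  have hJLu : ∀ z, nsq (M.mulVec ((Gmat u sqw).mulVec z))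
      ≤ (1 + ε) * quad (Gmat u headw) z := by
    intro z
    rw [hquadAr]
    exact (hM1 _ (hmem z)).2
  have hqCC : ∀ x, quad ((M * Gmat u sqw)ᴴ * (M * Gmat u sqw)) x
      = nsq (M.mulVec ((Gmat u sqw).mulVec x)) := by
    intro x
    rw [quad_conjmul, ← Matrix.mulVec_mulVec]
  have hqH : ∀ x : Fin m → ℂ, quad ((M * Gmat u sqw) * (M * Gmat u sqw)ᴴ) x
      = quad (M * headMatH lam u r * Mᴴ) x := by
    intro x
    rw [quad_sandwich, hArG, hquadAr]
    rw [show (M * Gmat u sqw) * (M * Gmat u sqw)ᴴ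
        = ((M * Gmat u sqw)ᴴ)ᴴ * ((M * Gmat u sqw)ᴴ) by
      rw [Matrix.conjTranspose_conjTranspose], quad_conjmul]
    congr 1
    rw [Matrix.conjTranspose_mul, ← Matrix.mulVec_mulVec, hBh]
  have hTpsd : (M * A * Mᴴ).PosSemidef := hPSD.mul_mul_conjTranspose_same M
  have hTH : (M * A * Mᴴ).IsHermitian := hTpsd.isHermitian
  have hHH : (M * headMatH lam u r * Mᴴ).IsHermitian := by
    have h0 : (headMatH lam u r).IsHermitian := by
      rw [hArG]; exact Gmat_herm u headw
    have h1 := Matrix.isHermitian_conjTranspose_mul_mul Mᴴ h0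
    rwa [Matrix.conjTranspose_conjTranspose] at h1
  have hsplit : M * A * Mᴴ
      = M * headMatH lam u r * Mᴴ + M * (A - headMatH lam u r) * Mᴴ := by
    rw [Matrix.mul_sub, Matrix.sub_mul]
    abel
  -- tail bounds
  have hnsqu : ∀ j : Fin N, nsq (u j) = 1 := by
    intro j
    have h1 := ip_self (u j)
    rw [hON j j, if_pos rfl] at h1
    exact_mod_cast h1.symm
  have hquadE : ∀ x : Fin m → ℂ, 0 ≤ quad (M * (A - headMatH lam u r) * Mᴴ) x ∧
      quad (M * (A - headMatH lam u r) * Mᴴ) x ≤ (1 + ε) * (∑ j, tailw j) * nsq x := by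
    intro x
    rw [quad_sandwich, htlG, quad_Gmat]
    constructor
    · exact Finset.sum_nonneg fun j _ => mul_nonneg (htailnn j) (by positivity)
    · have hterm : ∀ j ∈ Finset.univ,
          tailw j * ‖ip (u j) (Mᴴ.mulVec x)‖ ^ 2
            ≤ tailw j * ((1 + ε) * nsq x) := by
        intro j _
        rcases Nat.lt_or_ge (j : ℕ) r with hjr | hjr
        · have h0 : tailw j = 0 := by rw [htailw]; exact if_pos hjr
          rw [h0, zero_mul, zero_mul]
        · refine mul_le_mul_of_nonneg_left ?_ (htailnn j)
          have h1 : ip (u j) (Mᴴ.mulVec x) = ip (M.mulVec (u j)) x :=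
            (ip_mulVec M (u j) x).symm
          have h2 := ip_cs (M.mulVec (u j)) x
          have h4 := (hM3 (u j) ⟨j, hjr, rfl⟩).2
          rw [hnsqu j, mul_one] at h4
          rw [h1]
          have hx0 := nsq_nonneg x
          nlinarith
      calc ∑ j, tailw j * ‖ip (u j) (Mᴴ.mulVec x)‖ ^ 2
          ≤ ∑ j, tailw j * ((1 + ε) * nsq x) := Finset.sum_le_sum hterm
        _ = (1 + ε) * (∑ j, tailw j) * nsq x := by
            rw [← Finset.sum_mul]
            ring
  have htlherm : (A - headMatH lam u r)ᴴ = A - headMatH lam u r := by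
    rw [htlG]; exact Gmat_herm u tailw
  have hWeig : ∀ i, ((A - headMatH lam u r)ᴴ * (A - headMatH lam u r)).mulVec (u i)
      = (((tailw i) ^ 2 : ℝ) : ℂ) • u i := by
    intro i
    rw [← Matrix.mulVec_mulVec, htlherm, htlG, Gmat_mulVec_u hON, Matrix.mulVec_smul,
      Gmat_mulVec_u hON, smul_smul, ← Complex.ofReal_mul]
    congr 1
    rw [sq]
  have hnuc : nuclearNorm (A - headMatH lam u r) = ∑ j, tailw j := by
    rw [nuclearNorm,
      ← Fin.sum_univ_eq_sum_range (fun j => sval (A - headMatH lam u r) j) N]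
    have h1 : ∀ i : Fin N, sval (A - headMatH lam u r) (i : ℕ)
        = Real.sqrt ((Matrix.isHermitian_conjTranspose_mul_self (A - headMatH lam u r)).eigenvalues
          (Tuple.sort
            (Matrix.isHermitian_conjTranspose_mul_self (A - headMatH lam u r)).eigenvalues
            (Fin.rev i))) := by
      intro i
      rw [sval, dif_pos i.isLt]
    rw [Finset.sum_congr rfl fun i _ => h1 i]
    have h2 := Equiv.sum_comp (Fin.revPerm.trans
      (Tuple.sort (Matrix.isHermitian_conjTranspose_mul_self (A - headMatH lam u r)).eigenvalues))
      (fun i => Real.sqrt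
        ((Matrix.isHermitian_conjTranspose_mul_self (A - headMatH lam u r)).eigenvalues i))
    calc ∑ i : Fin N, Real.sqrt
          ((Matrix.isHermitian_conjTranspose_mul_self (A - headMatH lam u r)).eigenvalues
            (Tuple.sort
              (Matrix.isHermitian_conjTranspose_mul_self (A - headMatH lam u r)).eigenvalues
              (Fin.rev i)))
        = ∑ i : Fin N, Real.sqrt
            ((Matrix.isHermitian_conjTranspose_mul_self (A - headMatH lam u r)).eigenvalues i) := h2
      _ = ∑ i : Fin N, Real.sqrt ((tailw i) ^ 2) :=
          sum_f_eig _ (Matrix.isHermitian_conjTranspose_mul_self _) hON hWeig Real.sqrt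
      _ = ∑ j, tailw j := Finset.sum_congr rfl fun i _ => Real.sqrt_sq (htailnn i)
  have htsum : (∑ j, tailw j) ≤ ε * lam ⟨ℓ - 1, by omega⟩ := by
    rw [← hnuc]
    exact htail
  -- main per-index estimate
  have key : ∀ j : ℕ, (hj : j < ℓ) →
      (1 - ε) * lam ⟨j, by omega⟩ ≤ sval (M * A * Mᴴ) j ∧
      sval (M * A * Mᴴ) j ≤ (1 + ε) * lam ⟨j, by omega⟩ + (1 + ε) * (ε * lam ⟨j, by omega⟩) := by
    intro j hj
    have hjN : j < N := by omega
    have hlampos : 0 < lam ⟨j, hjN⟩ := by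
      rw [hdecay j hj]
      positivity
    have h1ε : (0:ℝ) ≤ 1 - ε := by linarith
    -- lower witness for Cᴴ C
    obtain ⟨hrank1, hlow1, _⟩ := span_witness (Gmat u headw) hON
      (fun i => Gmat_mulVec_u hON headw i)
      (fun i : Fin (j + 1) => Fin.castLE (by omega : j + 1 ≤ N) i)
      (fun a b hab => by simpa [Fin.ext_iff] using hab)
    have hPlowG : Plow ((M * Gmat u sqw)ᴴ * (M * Gmat u sqw)) j ((1 - ε) * lam ⟨j, hjN⟩) := by
      refine ⟨_, le_of_eq hrank1.symm, fun x hx => ?_⟩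
      have h5 := hlow1 (lam ⟨j, hjN⟩) ?_ x hx
      · have h6 := hJLl x
        rw [hqCC x, mul_assoc]
        calc (1 - ε) * (lam ⟨j, hjN⟩ * nsq x) ≤ (1 - ε) * quad (Gmat u headw) x :=
              mul_le_mul_of_nonneg_left h5 h1ε
          _ ≤ _ := h6
      · intro i
        have hir : ((Fin.castLE (by omega : j + 1 ≤ N) i : Fin N) : ℕ) < r := by
          have := i.isLt
          simp only [Fin.coe_castLE]
          omega
        have : headw (Fin.castLE (by omega : j + 1 ≤ N) i) =
            lam (Fin.castLE (by omega : j + 1 ≤ N) i) := by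
          rw [hheadw]; exact if_pos hir
        rw [this]
        refine hord _ _ ?_
        rw [Fin.le_def]
        simp only [Fin.coe_castLE]
        omega
    -- upper witness for Cᴴ C
    obtain ⟨hrank2, _, hup2⟩ := span_witness (Gmat u headw) hON
      (fun i => Gmat_mulVec_u hON headw i)
      (fun i : Fin (N - j) => (⟨j + (i : ℕ), by omega⟩ : Fin N))
      (fun a b hab => by simpa [Fin.ext_iff] using hab)
    have hQupG : Qup ((M * Gmat u sqw)ᴴ * (M * Gmat u sqw)) j ((1 + ε) * lam ⟨j, hjN⟩) := by
      refine ⟨_, by rw [hrank2]; omega, fun x hx => ?_⟩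
      have h5 := hup2 (lam ⟨j, hjN⟩) ?_ x hx
      · have h6 := hJLu x
        rw [hqCC x, mul_assoc]
        calc nsq (M.mulVec ((Gmat u sqw).mulVec x)) ≤ (1 + ε) * quad (Gmat u headw) x := h6
          _ ≤ (1 + ε) * (lam ⟨j, hjN⟩ * nsq x) :=
              mul_le_mul_of_nonneg_left h5 (by linarith)
      · intro i
        rcases Nat.lt_or_ge (j + (i : ℕ)) r with hir | hir
        · have : headw ⟨j + (i : ℕ), by omega⟩ = lam ⟨j + (i : ℕ), by omega⟩ := by
            rw [hheadw]; exact if_pos hir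
          rw [this]
          refine hord _ _ ?_
          simp only [Fin.mk_le_mk]
          omega
        · have : headw ⟨j + (i : ℕ), by omega⟩ = 0 := by
            rw [hheadw]; exact if_neg (Nat.not_lt.2 hir)
          rw [this]
          exact hlampos.le
    obtain ⟨hjm, hPlowCCt⟩ := transfer (M * Gmat u sqw) j ((1 - ε) * lam ⟨j, hjN⟩)
      (mul_pos (by linarith) hlampos) hPlowG
    have hPlowH : Plow (M * headMatH lam u r * Mᴴ) j ((1 - ε) * lam ⟨j, hjN⟩) :=
      Plow_congr hqH hPlowCCt
    have hwH := sEig_witness (M * headMatH lam u r * Mᴴ) hHH ⟨j, hjm⟩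
    have heHlow : (1 - ε) * lam ⟨j, hjN⟩
        ≤ sEig (M * headMatH lam u r * Mᴴ) hHH ⟨j, hjm⟩ := confront hPlowH hwH.2
    have heHup : sEig (M * headMatH lam u r * Mᴴ) hHH ⟨j, hjm⟩
        ≤ (1 + ε) * lam ⟨j, hjN⟩ := by
      rcases le_or_gt (sEig (M * headMatH lam u r * Mᴴ) hHH ⟨j, hjm⟩) 0 with h0 | h0
      · exact le_trans h0 (mul_nonneg (by linarith) hlampos.le)
      · have hPCC : Plow ((M * Gmat u sqw) * (M * Gmat u sqw)ᴴ) j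
            (sEig (M * headMatH lam u r * Mᴴ) hHH ⟨j, hjm⟩) :=
          Plow_congr (fun x => (hqH x).symm) hwH.1
        have hPCC2 : Plow (((M * Gmat u sqw)ᴴ)ᴴ * ((M * Gmat u sqw)ᴴ)) j
            (sEig (M * headMatH lam u r * Mᴴ) hHH ⟨j, hjm⟩) := by
          rwa [Matrix.conjTranspose_conjTranspose]
        obtain ⟨_, hPG2⟩ := transfer ((M * Gmat u sqw)ᴴ) j _ h0 hPCC2
        have hPG3 : Plow ((M * Gmat u sqw)ᴴ * (M * Gmat u sqw)) j
            (sEig (M * headMatH lam u r * Mᴴ) hHH ⟨j, hjm⟩) := by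
          rwa [Matrix.conjTranspose_conjTranspose] at hPG2
        exact confront hPG3 hQupG
    have hwT := sEig_witness (M * A * Mᴴ) hTH ⟨j, hjm⟩
    have hPlowT : Plow (M * A * Mᴴ) j ((1 - ε) * lam ⟨j, hjN⟩) := by
      obtain ⟨S, hS, hq'⟩ := hPlowH
      refine ⟨S, hS, fun x hx => ?_⟩
      have hE := (hquadE x).1
      have hq2 := hq' x hx
      rw [hsplit, quad_add]
      linarith
    have hTlow : (1 - ε) * lam ⟨j, hjN⟩ ≤ sEig (M * A * Mᴴ) hTH ⟨j, hjm⟩ :=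
      confront hPlowT hwT.2
    have hQupT : Qup (M * A * Mᴴ) j
        (sEig (M * headMatH lam u r * Mᴴ) hHH ⟨j, hjm⟩ + (1 + ε) * (∑ jj, tailw jj)) := by
      obtain ⟨S, hS, hq'⟩ := hwH.2
      refine ⟨S, hS, fun x hx => ?_⟩
      rw [hsplit, quad_add]
      have hE := (hquadE x).2
      have hq2 := hq' x hx
      rw [add_mul]
      exact add_le_add hq2 hE
    have hTup : sEig (M * A * Mᴴ) hTH ⟨j, hjm⟩
        ≤ sEig (M * headMatH lam u r * Mᴴ) hHH ⟨j, hjm⟩ + (1 + ε) * (∑ jj, tailw jj) :=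
      confront hwT.1 hQupT
    have hsv : sval (M * A * Mᴴ) j = sEig (M * A * Mᴴ) hTH ⟨j, hjm⟩ := by
      have := sval_eq_sEig hTpsd j hjm
      exact this
    have hlamL : lam ⟨ℓ - 1, by omega⟩ ≤ lam ⟨j, hjN⟩ := by
      refine hord _ _ ?_
      simp only [Fin.mk_le_mk]
      omega
    constructor
    · rw [hsv]; exact hTlow
    · rw [hsv]
      have h7 : (1 + ε) * (∑ jj, tailw jj) ≤ (1 + ε) * (ε * lam ⟨j, hjN⟩) := by
        have h8 : (∑ jj, tailw jj) ≤ ε * lam ⟨j, hjN⟩ := by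
          refine le_trans htsum ?_
          exact mul_le_mul_of_nonneg_left hlamL hε0.le
        exact mul_le_mul_of_nonneg_left h8 (by linarith)
      linarith
  -- wrap up
  have parta : ∀ j : ℕ, (hj : j < ℓ) →
      |sval (M * A * Mᴴ) j - lam ⟨j, by omega⟩| ≤ 4 * ε * lam ⟨j, by omega⟩ := by
    intro j hj
    have hjN : j < N := by omega
    have hpos : 0 < lam ⟨j, hjN⟩ := by
      rw [hdecay j hj]; positivity
    exact aux_abs hε0 (by linarith) hpos (key j hj).1 (key j hj).2
  have hbound : ∀ j : ℕ, (hj : j < ℓ) →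
      (1 - 4 * ε) * (c * q ^ (j + 1)) ≤ sval (M * A * Mᴴ) j ∧
      sval (M * A * Mᴴ) j ≤ (1 + 4 * ε) * (c * q ^ (j + 1)) := by
    intro j hj
    have hjN : j < N := by omega
    have hd : lam (⟨j, hjN⟩ : Fin N) = c * q ^ (j + 1) := hdecay j hj
    have h := aux_sandwich (ε := ε) (s := sval (M * A * Mᴴ) j) (L := lam ⟨j, hjN⟩) (parta j hj)
    rwa [hd] at h
  refine ⟨parta, ?_, ?_⟩
  · intro j hj1 hjl
    obtain ⟨hb1, hb2⟩ := hbound j hjl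
    obtain ⟨hb3, hb4⟩ := hbound (j - 1) (by omega)
    have hgeom : (1 + 4 * ε) * q < 1 - 4 * ε := aux_geom hq0 hε0 hεq
    have hcq : 0 < c * q ^ j := by positivity
    have hj1' : j - 1 + 1 = j := by omega
    rw [hj1'] at hb3 hb4
    have hmid : (1 + 4 * ε) * c * q ^ (j + 1) < (1 - 4 * ε) * c * q ^ j := by
      have h1 : (1 + 4 * ε) * c * q ^ (j + 1) = ((1 + 4 * ε) * q) * (c * q ^ j) := by
        rw [pow_succ]; ring
      have h2 : (1 - 4 * ε) * c * q ^ j = (1 - 4 * ε) * (c * q ^ j) := by ring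
      rw [h1, h2]
      exact mul_lt_mul_of_pos_right hgeom hcq
    refine ⟨?_, hmid, ?_⟩
    · rw [mul_assoc]; exact hb2
    · rw [mul_assoc]; exact hb3
  · intro j hjc
    have hj1 : j < ℓ := by omega
    have hj2 : j + 1 < ℓ := by omega
    obtain ⟨hx1, hx2⟩ := hbound j hj1
    obtain ⟨hy1, hy2⟩ := hbound (j + 1) hj2
    have hcq1 : 0 < c * q ^ (j + 1) := by positivity
    have hcq2 : 0 < c * q ^ (j + 1 + 1) := by positivity
    have hε4 : (0:ℝ) < 1 - 4 * ε := by linarith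
    have hxpos : 0 < sval (M * A * Mᴴ) j :=
      lt_of_lt_of_le (mul_pos hε4 hcq1) hx1
    have hynn : 0 ≤ sval (M * A * Mᴴ) (j + 1) :=
      le_trans (mul_pos hε4 hcq2).le hy1
    have hgeom2 : 2 * (1 + 4 * ε) * q < 1 - 4 * ε := aux_geom2 hq0 hε0 hε20 hεq
    have h2y : 2 * sval (M * A * Mᴴ) (j + 1) < sval (M * A * Mᴴ) j := by
      have hkey2 : 2 * ((1 + 4 * ε) * (c * q ^ (j + 1 + 1)))
          < (1 - 4 * ε) * (c * q ^ (j + 1)) := by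
        have hq' : q ^ (j + 1 + 1) = q ^ (j + 1) * q := pow_succ q (j + 1)
        rw [hq']
        have h3 : 2 * ((1 + 4 * ε) * (c * (q ^ (j + 1) * q)))
            = (2 * (1 + 4 * ε) * q) * (c * q ^ (j + 1)) := by ring
        rw [h3]
        exact mul_lt_mul_of_pos_right hgeom2 hcq1
      calc 2 * sval (M * A * Mᴴ) (j + 1)
          ≤ 2 * ((1 + 4 * ε) * (c * q ^ (j + 1 + 1))) := by
            exact mul_le_mul_of_nonneg_left hy2 (by norm_num)
        _ < (1 - 4 * ε) * (c * q ^ (j + 1)) := hkey2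
        _ ≤ sval (M * A * Mᴴ) j := hx1
    exact aux_ratio hxpos hynn h2y
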